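/- If π is an invariant distribution of the random walk (m̄_c(t)), then λ₂ + λ₁p₁·P(0,1) − μ₂c₂ = λ₂·P(1,0) + λ₁p₁·π(0,0), where P(1,0) = Σ_{m₁∈ℕ} π(m₁,0) and P(0,1) = Σ_{m₂∈ℕ} π(0,m₂). -/

import Mathlib

lemma myaux_summable_delta (f : ℕ → ℝ) :
    Summable (fun n => (if n = 0 then (1:ℝ) else 0) * f n) := by
  apply summable_of_ne_finset_zero (s := {0})
  intro n hn
  simp only [Finset.mem_singleton] at hn
  simp [hn]

lemma myaux_tsum_delta (f : ℕ → ℝ) :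
    ∑' n, (if n = 0 then (1:ℝ) else 0) * f n = f 0 := by
  rw [tsum_eq_single 0]
  · simp
  · intro n hn; simp [hn]

lemma myaux_summable_ind (f : ℕ → ℝ) (hf : Summable f) :
    Summable (fun n => (if 0 < n then (1:ℝ) else 0) * f n) := by
  have h := hf.sub (myaux_summable_delta f)
  apply h.congr
  intro n
  rcases Nat.eq_zero_or_pos n with h0 | h0
  · simp [h0]
  · simp [h0, Nat.pos_iff_ne_zero.mp h0]

lemma myaux_tsum_ind (f : ℕ → ℝ) (hf : Summable f) :
    ∑' n, (if 0 < n then (1:ℝ) else 0) * f n = (∑' n, f n) - f 0 := by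
  have h : ∀ n, (if 0 < n then (1:ℝ) else 0) * f n = f n - (if n = 0 then (1:ℝ) else 0) * f n := by
    intro n
    rcases Nat.eq_zero_or_pos n with h0 | h0
    · simp [h0]
    · simp [h0, Nat.pos_iff_ne_zero.mp h0]
  rw [tsum_congr h, Summable.tsum_sub hf (myaux_summable_delta f), myaux_tsum_delta]

lemma myaux_summable_pred (f : ℕ → ℝ) (hf : Summable f) :
    Summable (fun n => (if 0 < n then (1:ℝ) else 0) * f (n - 1)) := by
  apply (summable_nat_add_iff 1).mp
  apply hf.congr
  intro n
  simp

lemma myaux_tsum_pred (f : ℕ → ℝ) (hf : Summable f) :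
    ∑' n, (if 0 < n then (1:ℝ) else 0) * f (n - 1) = ∑' n, f n := by
  rw [Summable.tsum_eq_zero_add (myaux_summable_pred f hf)]
  simp

lemma myaux_tsum_succ (f : ℕ → ℝ) (hf : Summable f) :
    ∑' n, f (n + 1) = (∑' n, f n) - f 0 := by
  have := Summable.tsum_eq_zero_add hf
  linarith

/-- π is an invariant (stationary) probability distribution of the random walk (m̄_l(t)):
nonnegative, sums to 1, and satisfies the balance equations. -/
def IsInvariantDist (la1 la2 mu1 mu2 l1 l2 p1 p2 : ℝ) (π : ℕ × ℕ → ℝ) : Prop :=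
  (∀ m, 0 ≤ π m) ∧ (∑' m : ℕ × ℕ, π m = 1) ∧
  ∀ m1 m2 : ℕ,
    π (m1, m2) * (mu1 * l1 + mu2 * l2
        + (la1 + p2 * la2 * (if m2 = 0 then 1 else 0)) * (if 0 < m1 then 1 else 0)
        + (la2 + p1 * la1 * (if m1 = 0 then 1 else 0)) * (if 0 < m2 then 1 else 0))
    = mu1 * l1 * π (m1 - 1, m2) * (if 0 < m1 then 1 else 0)
      + mu2 * l2 * π (m1, m2 - 1) * (if 0 < m2 then 1 else 0)
      + (la1 + p2 * la2 * (if m2 = 0 then 1 else 0)) * π (m1 + 1, m2)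
      + (la2 + p1 * la1 * (if m1 = 0 then 1 else 0)) * π (m1, m2 + 1)

theorem stmt2 (la1 la2 mu1 mu2 c1 c2 p1 p2 : ℝ)
    (hla1 : 0 < la1) (hla2 : 0 < la2) (hmu1 : 0 < mu1) (hmu2 : 0 < mu2)
    (hc1 : 0 < c1) (hc2 : 0 < c2)
    (hp1 : 0 ≤ p1) (hp1' : p1 ≤ 1) (hp2 : 0 ≤ p2) (hp2' : p2 ≤ 1)
    (π : ℕ × ℕ → ℝ) (hπ : IsInvariantDist la1 la2 mu1 mu2 c1 c2 p1 p2 π) :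
    la2 + la1 * p1 * (∑' m2 : ℕ, π (0, m2)) - mu2 * c2
      = la2 * (∑' m1 : ℕ, π (m1, 0)) + la1 * p1 * π (0, 0) := by
  obtain ⟨hpos, hsum, hbal⟩ := hπ
  have hS : Summable π := by
    by_contra h
    rw [tsum_eq_zero_of_not_summable h] at hsum
    norm_num at hsum
  have hrow : ∀ j : ℕ, Summable (fun m1 => π (m1, j)) := by
    intro j
    apply hS.comp_injective
    intro a b hab
    simpa using hab
  have hcol : Summable (fun m2 => π (0, m2)) := by
    apply hS.comp_injective
    intro a b hab
    simpa using hab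
  set Q : ℕ → ℝ := fun j => ∑' m1, π (m1, j) with hQdef
  -- level balance
  have level : ∀ j : ℕ,
      mu2 * c2 * Q j + (if 0 < j then (1:ℝ) else 0) * (la2 * Q j + p1 * la1 * π (0, j))
      = mu2 * c2 * Q (j - 1) * (if 0 < j then (1:ℝ) else 0)
        + (la2 * Q (j + 1) + p1 * la1 * π (0, j + 1)) := by
    intro j
    have hL : ∑' m1 : ℕ, π (m1, j) * (mu1 * c1 + mu2 * c2
          + (la1 + p2 * la2 * (if j = 0 then (1:ℝ) else 0)) * (if 0 < m1 then (1:ℝ) else 0)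
          + (la2 + p1 * la1 * (if m1 = 0 then (1:ℝ) else 0)) * (if 0 < j then (1:ℝ) else 0))
        = (mu1 * c1 + mu2 * c2 + la2 * (if 0 < j then (1:ℝ) else 0)) * Q j
          + (la1 + p2 * la2 * (if j = 0 then (1:ℝ) else 0)) * (Q j - π (0, j))
          + (p1 * la1 * (if 0 < j then (1:ℝ) else 0)) * π (0, j) := by
      have e1 : (fun m1 : ℕ => π (m1, j) * (mu1 * c1 + mu2 * c2
            + (la1 + p2 * la2 * (if j = 0 then (1:ℝ) else 0)) * (if 0 < m1 then (1:ℝ) else 0)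
            + (la2 + p1 * la1 * (if m1 = 0 then (1:ℝ) else 0)) * (if 0 < j then (1:ℝ) else 0)))
          = fun m1 : ℕ =>
            (mu1 * c1 + mu2 * c2 + la2 * (if 0 < j then (1:ℝ) else 0)) * π (m1, j)
            + (la1 + p2 * la2 * (if j = 0 then (1:ℝ) else 0))
                * ((if 0 < m1 then (1:ℝ) else 0) * π (m1, j))
            + (p1 * la1 * (if 0 < j then (1:ℝ) else 0))
                * ((if m1 = 0 then (1:ℝ) else 0) * π (m1, j)) := by
        funext m1; ring
      rw [e1, Summable.tsum_add (Summable.add ((hrow j).mul_left _)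
            ((myaux_summable_ind _ (hrow j)).mul_left _))
            ((myaux_summable_delta _).mul_left _),
          Summable.tsum_add ((hrow j).mul_left _) ((myaux_summable_ind _ (hrow j)).mul_left _),
          tsum_mul_left, tsum_mul_left, tsum_mul_left,
          myaux_tsum_ind _ (hrow j), myaux_tsum_delta]
    have hR : ∑' m1 : ℕ, (mu1 * c1 * π (m1 - 1, j) * (if 0 < m1 then (1:ℝ) else 0)
          + mu2 * c2 * π (m1, j - 1) * (if 0 < j then (1:ℝ) else 0)
          + (la1 + p2 * la2 * (if j = 0 then (1:ℝ) else 0)) * π (m1 + 1, j)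
          + (la2 + p1 * la1 * (if m1 = 0 then (1:ℝ) else 0)) * π (m1, j + 1))
        = mu1 * c1 * Q j + mu2 * c2 * (if 0 < j then (1:ℝ) else 0) * Q (j - 1)
          + (la1 + p2 * la2 * (if j = 0 then (1:ℝ) else 0)) * (Q j - π (0, j))
          + (la2 * Q (j + 1) + p1 * la1 * π (0, j + 1)) := by
      have e2 : (fun m1 : ℕ => (mu1 * c1 * π (m1 - 1, j) * (if 0 < m1 then (1:ℝ) else 0)
            + mu2 * c2 * π (m1, j - 1) * (if 0 < j then (1:ℝ) else 0)
            + (la1 + p2 * la2 * (if j = 0 then (1:ℝ) else 0)) * π (m1 + 1, j)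
            + (la2 + p1 * la1 * (if m1 = 0 then (1:ℝ) else 0)) * π (m1, j + 1)))
          = fun m1 : ℕ =>
            (mu1 * c1) * ((if 0 < m1 then (1:ℝ) else 0) * π (m1 - 1, j))
            + (mu2 * c2 * (if 0 < j then (1:ℝ) else 0)) * π (m1, j - 1)
            + (la1 + p2 * la2 * (if j = 0 then (1:ℝ) else 0)) * π (m1 + 1, j)
            + (la2 * π (m1, j + 1)
                + (p1 * la1) * ((if m1 = 0 then (1:ℝ) else 0) * π (m1, j + 1))) := by
        funext m1; ring
      have s1 : Summable (fun m1 : ℕ =>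
          (mu1 * c1) * ((if 0 < m1 then (1:ℝ) else 0) * π (m1 - 1, j))) :=
        (myaux_summable_pred _ (hrow j)).mul_left _
      have s2 : Summable (fun m1 : ℕ =>
          (mu2 * c2 * (if 0 < j then (1:ℝ) else 0)) * π (m1, j - 1)) :=
        (hrow (j - 1)).mul_left _
      have s3 : Summable (fun m1 : ℕ =>
          (la1 + p2 * la2 * (if j = 0 then (1:ℝ) else 0)) * π (m1 + 1, j)) :=
        ((summable_nat_add_iff 1).mpr (hrow j)).mul_left _
      have s4a : Summable (fun m1 : ℕ => la2 * π (m1, j + 1)) := (hrow (j + 1)).mul_left _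
      have s4b : Summable (fun m1 : ℕ =>
          (p1 * la1) * ((if m1 = 0 then (1:ℝ) else 0) * π (m1, j + 1))) :=
        (myaux_summable_delta _).mul_left _
      rw [e2, Summable.tsum_add ((s1.add s2).add s3) (s4a.add s4b), Summable.tsum_add (s1.add s2) s3,
          Summable.tsum_add s1 s2, Summable.tsum_add s4a s4b,
          tsum_mul_left, tsum_mul_left, tsum_mul_left, tsum_mul_left, tsum_mul_left,
          myaux_tsum_pred _ (hrow j), myaux_tsum_delta,
          myaux_tsum_succ _ (hrow j)]
    have h0 := tsum_congr (L := SummationFilter.unconditional ℕ) (fun m1 => hbal m1 j)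
    rw [hL, hR] at h0
    linear_combination h0
  -- cut equations
  have cut : ∀ j : ℕ, mu2 * c2 * Q j = la2 * Q (j + 1) + p1 * la1 * π (0, j + 1) := by
    intro j
    induction j with
    | zero =>
      have h := level 0
      simpa using h
    | succ k ih =>
      have h := level (k + 1)
      simp only [Nat.add_sub_cancel, lt_irrefl] at h
      have hpos' : (if 0 < k + 1 then (1:ℝ) else 0) = 1 := by simp
      rw [hpos'] at h
      linarith
  -- summing up
  have hswap : Summable (fun p : ℕ × ℕ => π (p.2, p.1)) :=
    (Equiv.prodComm ℕ ℕ).summable_iff.mpr hS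
  have hQs : Summable Q := hswap.prod
  have hQtot : ∑' j, Q j = 1 := by
    have h1 : ∑' p : ℕ × ℕ, π (p.2, p.1) = ∑' j, Q j := Summable.tsum_prod hswap
    have h2 : ∑' p : ℕ × ℕ, π (p.2, p.1) = ∑' p : ℕ × ℕ, π p :=
      (Equiv.prodComm ℕ ℕ).tsum_eq π
    rw [← h1, h2, hsum]
  have hfin : mu2 * c2 * (∑' j, Q j)
      = la2 * ((∑' j, Q j) - Q 0) + p1 * la1 * ((∑' m2, π (0, m2)) - π (0, 0)) := by
    calc mu2 * c2 * (∑' j, Q j) = ∑' j, mu2 * c2 * Q j := tsum_mul_left.symm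
      _ = ∑' j, (la2 * Q (j + 1) + p1 * la1 * π (0, j + 1)) := tsum_congr cut
      _ = la2 * (∑' j, Q (j + 1)) + p1 * la1 * (∑' j, π (0, j + 1)) := by
          rw [Summable.tsum_add (((summable_nat_add_iff 1).mpr hQs).mul_left _)
              (((summable_nat_add_iff 1).mpr hcol).mul_left _), tsum_mul_left, tsum_mul_left]
      _ = la2 * ((∑' j, Q j) - Q 0) + p1 * la1 * ((∑' m2, π (0, m2)) - π (0, 0)) := by
          rw [myaux_tsum_succ Q hQs, myaux_tsum_succ _ hcol]
  rw [hQtot] at hfin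
  have hQ0 : Q 0 = ∑' m1, π (m1, 0) := rfl
  linarith [hfin]
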